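/- The infinite series Σ_{k=0}^{∞} binom(2k,k) · G(k) / (4^k · (2k+3)(2k+4)) converges and equals π³/96 - 47π/144 + 20/27, where G(k) = Σ_{j=0}^{k-1} 1/(2j+1)². -/

import Mathlib

open Real Finset

/-- `G k = Σ_{j=0}^{k-1} 1/(2j+1)²`. -/
noncomputable def G (k : ℕ) : ℝ :=
  ∑ j ∈ Finset.range k, 1 / (2 * (j : ℝ) + 1) ^ 2

namespace CBG

noncomputable def b (k : ℕ) : ℝ := (Nat.choose (2 * k) k : ℝ) / 4 ^ k

noncomputable def c (k : ℕ) : ℝ := b k * G k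

lemma b_zero : b 0 = 1 := by simp [b]

lemma b_pos (k : ℕ) : 0 < b k := by
  apply div_pos (by exact_mod_cast Nat.choose_pos (by omega)) (by positivity)

lemma b_succ (k : ℕ) : b (k + 1) = b k * (2 * k + 1) / (2 * k + 2) := by
  have h : (k + 1) * Nat.choose (2 * (k+1)) (k+1) = 2 * (2 * k + 1) * Nat.choose (2*k) k := by
    have := Nat.succ_mul_centralBinom_succ k
    simpa [Nat.centralBinom] using this
  have hc : ((k:ℝ) + 1) * (Nat.choose (2 * (k+1)) (k+1) : ℝ) = 2 * (2*(k:ℝ)+1) * (Nat.choose (2*k) k : ℝ) := by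
    exact_mod_cast congrArg (Nat.cast : ℕ → ℝ) h
  simp only [b]
  have hk1 : ((k:ℝ)+1) ≠ 0 := by positivity
  field_simp
  linear_combination (2 * (4:ℝ)^k) * hc

lemma b_le_one (k : ℕ) : b k ≤ 1 := by
  induction k with
  | zero => simp [b_zero]
  | succ n ih =>
    rw [b_succ]
    rw [div_le_one (by positivity)]
    nlinarith [b_pos n, ih]

lemma G_zero : G 0 = 0 := by simp [G]

lemma G_succ (k : ℕ) : G (k + 1) = G k + 1 / (2 * (k:ℝ) + 1) ^ 2 := by
  simp [G, Finset.sum_range_succ]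

lemma G_nonneg (k : ℕ) : 0 ≤ G k := by
  apply Finset.sum_nonneg; intro j _; positivity

lemma G_le_two (k : ℕ) : G k ≤ 2 := by
  have H : ∀ n : ℕ, (∑ j ∈ Finset.range n, 1 / ((j:ℝ)+1)^2) ≤ 2 - 2/((n:ℝ)+1) := by
    intro n
    induction n with
    | zero => norm_num
    | succ m ih =>
      rw [Finset.sum_range_succ]
      push_cast
      have h1 : (0:ℝ) < (m:ℝ) + 1 := by positivity
      have h2 : (0:ℝ) < (m:ℝ) + 2 := by positivity
      have key : 1 / ((m:ℝ)+1)^2 ≤ 2/((m:ℝ)+1) - 2/((m:ℝ)+2) := by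
        rw [div_sub_div _ _ (ne_of_gt h1) (ne_of_gt h2), div_le_div_iff₀ (by positivity) (by positivity)]
        nlinarith
      have h3 : 2/((m:ℝ)+1+1) = 2/((m:ℝ)+2) := by ring_nf
      rw [h3]
      linarith
  have hle : G k ≤ ∑ j ∈ Finset.range k, 1 / ((j:ℝ)+1)^2 := by
    apply Finset.sum_le_sum
    intro j _
    have hj : (0:ℝ) ≤ j := Nat.cast_nonneg j
    apply div_le_div_of_nonneg_left one_pos.le (by positivity)
    nlinarith
  have hpos : 2/((k:ℝ)+1) > 0 := by positivity
  linarith [H k, hle]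

lemma c_nonneg (k : ℕ) : 0 ≤ c k := mul_nonneg (b_pos k).le (G_nonneg k)

lemma c_le_two (k : ℕ) : c k ≤ 2 := by
  calc c k ≤ 1 * 2 := mul_le_mul (b_le_one k) (G_le_two k) (G_nonneg k) zero_le_one
  _ = 2 := one_mul 2

lemma c_zero : c 0 = 0 := by simp [c, G_zero]

lemma c_rec (k : ℕ) : (2 * (k:ℝ) + 2) * c (k+1) = (2 * k + 1) * c k + b k / (2 * k + 1) := by
  have h1 : (0:ℝ) < 2 * k + 1 := by positivity
  have h2 : (0:ℝ) < 2 * k + 2 := by positivity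
  simp only [c, b_succ, G_succ]
  field_simp



lemma summable_series {a : ℕ → ℝ} {e : ℕ → ℕ} {C : ℝ}
    (hC : ∀ n, |a n| ≤ C) (he1 : ∀ n, n ≤ e n) {x : ℝ} (hx : |x| < 1) :
    Summable (fun n => a n * x ^ (e n)) := by
  apply Summable.of_norm
  apply Summable.of_nonneg_of_le (fun n => norm_nonneg _) (fun n => ?_)
    (((summable_geometric_of_lt_one (abs_nonneg x) hx)).mul_left C)
  rw [norm_mul, norm_pow]
  calc ‖a n‖ * ‖x‖ ^ (e n) ≤ C * ‖x‖ ^ n := by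
        apply mul_le_mul (hC n) ?_ (by positivity) ((abs_nonneg (a n)).trans (hC n))
        exact pow_le_pow_of_le_one (abs_nonneg x) hx.le (he1 n)
    _ = C * |x| ^ n := rfl

lemma summable_deriv_aux {C : ℝ} (hC0 : 0 ≤ C) {r : ℝ} (hr0 : 0 < r) (hr1 : r < 1) :
    Summable (fun n : ℕ => C * (2*(n:ℝ)+1) * r ^ (n - 1)) := by
  have hs : Summable (fun n : ℕ => (C/r) * ((2*(n:ℝ)+1) * r ^ n)) := by
    apply Summable.mul_left
    have h1 : Summable (fun n : ℕ => 2 * ((n:ℝ) * r ^ n)) := by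
      have := summable_pow_mul_geometric_of_norm_lt_one (R := ℝ) 1
        (r := r) (by rwa [Real.norm_eq_abs, abs_of_pos hr0])
      exact (this.mul_left 2).congr (by intro n; push_cast; ring)
    have h2 : Summable (fun n : ℕ => r ^ n) := summable_geometric_of_lt_one hr0.le hr1
    exact (h1.add h2).congr (by intro n; ring)
  apply Summable.of_nonneg_of_le (fun n => by positivity) (fun n => ?_) hs
  have key : r ^ (n - 1) ≤ r ^ n / r := by
    cases n with
    | zero =>
        norm_num
        rw [show (1:ℝ) = r * r⁻¹ by field_simp]
        exact mul_le_of_le_one_left (by positivity) hr1.le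
    | succ m => simp only [Nat.add_sub_cancel]; rw [le_div_iff₀ hr0, ← pow_succ]
  calc C * (2*(n:ℝ)+1) * r ^ (n-1) ≤ C * (2*(n:ℝ)+1) * (r ^ n / r) := by
        apply mul_le_mul_of_nonneg_left key (by positivity)
    _ = C / r * ((2*(n:ℝ)+1) * r ^ n) := by ring

lemma hasDerivAt_series {a : ℕ → ℝ} {e : ℕ → ℕ} {C : ℝ}
    (hC : ∀ n, |a n| ≤ C) (he1 : ∀ n, n ≤ e n) (he2 : ∀ n, e n ≤ 2*n+1)
    {x : ℝ} (hx : |x| < 1) :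
    HasDerivAt (fun y => ∑' n, a n * y ^ (e n))
      (∑' n, a n * ((e n) * x ^ (e n - 1))) x := by
  have hC0 : 0 ≤ C := (abs_nonneg (a 0)).trans (hC 0)
  set r : ℝ := (1 + |x|) / 2 with hr
  have hr0 : 0 < r := by positivity
  have hr1 : r < 1 := by rw [hr]; linarith
  have hxr : |x| < r := by rw [hr]; linarith
  refine hasDerivAt_tsum_of_isPreconnected
    (g := fun n y => a n * y ^ e n)
    (g' := fun n y => a n * ((e n : ℝ) * y ^ (e n - 1)))
    (u := fun n : ℕ => C * (2*(n:ℝ)+1) * r ^ (n-1))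
    (t := Set.Ioo (-r) r) (y₀ := 0)
    (summable_deriv_aux hC0 hr0 hr1) isOpen_Ioo
    (convex_Ioo _ _).isPreconnected
    (fun n y _ => by simpa using (hasDerivAt_pow (e n) y).const_mul (a n))
    (fun n y hy => ?_) (by constructor <;> simp [hr0]) ?_ ?_
  · -- bound
    have hyr : |y| ≤ r := by
      rw [abs_le]; exact ⟨(hy.1).le, hy.2.le⟩
    rw [Real.norm_eq_abs, abs_mul, abs_mul, abs_pow, Nat.abs_cast]
    calc |a n| * ((e n : ℝ) * |y| ^ (e n - 1)) ≤ C * ((2*(n:ℝ)+1) * r ^ (n-1)) := by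
          apply mul_le_mul (hC n) ?_ (by positivity) hC0
          apply mul_le_mul ?_ ?_ (by positivity) (by positivity)
          · exact_mod_cast he2 n
          · calc |y| ^ (e n - 1) ≤ r ^ (e n - 1) :=
                  pow_le_pow_left₀ (abs_nonneg y) hyr _
              _ ≤ r ^ (n - 1) := pow_le_pow_of_le_one hr0.le hr1.le (by have := he1 n; omega)
      _ = C * (2*(n:ℝ)+1) * r ^ (n-1) := by ring
  · -- summable at 0
    apply summable_of_ne_finset_zero (s := Finset.range 1)
    intro n hn
    simp only [Finset.mem_range, Nat.lt_one_iff] at hn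
    have : e n ≠ 0 := by have := he1 n; omega
    simp [zero_pow this]
  · exact Set.mem_Ioo.2 ⟨neg_lt_of_abs_lt hxr, lt_of_abs_lt hxr⟩

lemma summable_deriv_series {a : ℕ → ℝ} {e : ℕ → ℕ} {C : ℝ}
    (hC : ∀ n, |a n| ≤ C) (he1 : ∀ n, n ≤ e n) (he2 : ∀ n, e n ≤ 2*n+1)
    {x : ℝ} (hx : |x| < 1) :
    Summable (fun n => a n * ((e n : ℝ) * x ^ (e n - 1))) := by
  have hC0 : 0 ≤ C := (abs_nonneg (a 0)).trans (hC 0)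
  set r : ℝ := (1 + |x|) / 2 with hr
  have hr0 : 0 < r := by positivity
  have hr1 : r < 1 := by rw [hr]; linarith
  have hxr : |x| ≤ r := by rw [hr]; linarith
  apply Summable.of_norm
  apply Summable.of_nonneg_of_le (fun n => norm_nonneg _) (fun n => ?_)
    (summable_deriv_aux hC0 hr0 hr1)
  rw [Real.norm_eq_abs, abs_mul, abs_mul, abs_pow, Nat.abs_cast]
  calc |a n| * ((e n : ℝ) * |x| ^ (e n - 1)) ≤ C * ((2*(n:ℝ)+1) * r ^ (n-1)) := by
        apply mul_le_mul (hC n) ?_ (by positivity) hC0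
        apply mul_le_mul ?_ ?_ (by positivity) (by positivity)
        · exact_mod_cast he2 n
        · calc |x| ^ (e n - 1) ≤ r ^ (e n - 1) := pow_le_pow_left₀ (abs_nonneg x) hxr _
            _ ≤ r ^ (n - 1) := pow_le_pow_of_le_one hr0.le hr1.le (by have := he1 n; omega)
    _ = C * (2*(n:ℝ)+1) * r ^ (n-1) := by ring


noncomputable def fS (x : ℝ) : ℝ := ∑' n, b n * x ^ (2*n)
noncomputable def aS (x : ℝ) : ℝ := ∑' n, (b n / (2*(n:ℕ)+1)) * x ^ (2*n+1)
noncomputable def hS (x : ℝ) : ℝ := ∑' n, c n * x ^ (2*n)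

lemma abs_b_le (n : ℕ) : |b n| ≤ 1 := by rw [abs_of_pos (b_pos n)]; exact b_le_one n
lemma abs_bd_le (n : ℕ) : |b n / (2*(n:ℕ)+1)| ≤ 1 := by
  rw [abs_div, abs_of_pos (b_pos n)]
  have h1 : (1:ℝ) ≤ |(2*(n:ℕ)+1 : ℝ)| := by
    rw [abs_of_pos (by positivity)]
    have : (0:ℝ) ≤ (n:ℝ) := Nat.cast_nonneg n
    linarith
  calc b n / |(2*(n:ℕ)+1:ℝ)| ≤ b n / 1 :=
        div_le_div_of_nonneg_left (b_pos n).le one_pos h1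
    _ = b n := div_one _
    _ ≤ 1 := b_le_one n
lemma abs_c_le (n : ℕ) : |c n| ≤ 2 := by
  rw [abs_of_nonneg (c_nonneg n)]; exact c_le_two n

lemma b_rec (n : ℕ) : (2*(n:ℝ)+2) * b (n+1) = (2*(n:ℝ)+1) * b n := by
  rw [b_succ]
  have h : (2*(n:ℝ)+2) ≠ 0 := by positivity
  field_simp

lemma summable_fS {x : ℝ} (hx : |x| < 1) : Summable (fun n => b n * x ^ (2*n)) :=
  summable_series abs_b_le (fun n => by omega) hx
lemma summable_aS {x : ℝ} (hx : |x| < 1) : Summable (fun n => (b n / (2*(n:ℕ)+1)) * x ^ (2*n+1)) :=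
  summable_series abs_bd_le (fun n => by omega) hx
lemma summable_hS {x : ℝ} (hx : |x| < 1) : Summable (fun n => c n * x ^ (2*n)) :=
  summable_series abs_c_le (fun n => by omega) hx

lemma hasDerivAt_fS {x : ℝ} (hx : |x| < 1) :
    HasDerivAt fS (∑' n, b n * ((2*n : ℕ) * x ^ (2*n - 1))) x :=
  hasDerivAt_series abs_b_le (fun n => by omega) (fun n => by omega) hx
lemma summable_fD {x : ℝ} (hx : |x| < 1) :
    Summable (fun n => b n * ((2*n : ℕ) * x ^ (2*n - 1))) :=
  summable_deriv_series abs_b_le (fun n => by omega) (fun n => by omega) hx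

lemma hasDerivAt_aS {x : ℝ} (hx : |x| < 1) :
    HasDerivAt aS (∑' n, (b n / (2*(n:ℕ)+1)) * ((2*n+1 : ℕ) * x ^ (2*n+1 - 1))) x :=
  hasDerivAt_series abs_bd_le (fun n => by omega) (fun n => by omega) hx

lemma hasDerivAt_hS {x : ℝ} (hx : |x| < 1) :
    HasDerivAt hS (∑' n, c n * ((2*n : ℕ) * x ^ (2*n - 1))) x :=
  hasDerivAt_series abs_c_le (fun n => by omega) (fun n => by omega) hx
lemma summable_hD {x : ℝ} (hx : |x| < 1) :
    Summable (fun n => c n * ((2*n : ℕ) * x ^ (2*n - 1))) :=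
  summable_deriv_series abs_c_le (fun n => by omega) (fun n => by omega) hx

lemma ode_f {x : ℝ} (hx : |x| < 1) :
    (1 - x^2) * (∑' n, b n * ((2*n : ℕ) * x ^ (2*n - 1))) - x * fS x = 0 := by
  set D := ∑' n, b n * ((2*n : ℕ) * x ^ (2*n - 1)) with hD
  set g : ℕ → ℝ := fun n => b n * ((2*n : ℕ) * x ^ (2*n - 1)) with hg
  have hgsum : HasSum g D := (summable_fD hx).hasSum
  have S0 : HasSum (fun n => b n * x ^ (2*n)) (fS x) := (summable_fS hx).hasSum
  have hT : HasSum (fun n => (1 - x^2) * g n - x * (b n * x ^ (2*n)))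
      ((1 - x^2) * D - x * fS x) := (hgsum.mul_left _).sub (S0.mul_left _)
  have hshift : HasSum (fun n => g (n+1)) (D - ∑ i ∈ Finset.range 1, g i) :=
    ((hasSum_nat_add_iff' 1).2 hgsum)
  have hT2 : HasSum (fun n => g n - g (n+1)) (D - (D - ∑ i ∈ Finset.range 1, g i)) :=
    hgsum.sub hshift
  have hTg : ∀ n, (1 - x^2) * g n - x * (b n * x ^ (2*n)) = g n - g (n+1) := by
    intro n
    cases n with
    | zero =>
      have hb1 : b 1 = 1 / 2 := by
        rw [show b 1 = _ from b_succ 0, b_zero]; norm_num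
      simp [hg, b_zero, hb1]
    | succ m =>
      have e1 : 2*(m+1) - 1 = 2*m+1 := by omega
      have e2 : 2*(m+1+1) - 1 = 2*m+3 := by omega
      have e3 : 2*(m+1) = 2*m+2 := by omega
      have e4 : 2*(m+1+1) = 2*m+4 := by omega
      simp only [hg, e1, e2, e3, e4]
      push_cast
      have hb := b_rec (m+1)
      push_cast at hb
      linear_combination (x ^ (2*m+3)) * hb
  have hfun : (fun n => (1 - x^2) * g n - x * (b n * x ^ (2*n))) = fun n => g n - g (n+1) :=
    funext hTg
  rw [hfun] at hT
  have := hT.unique hT2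
  rw [this]
  simp [hg]

lemma sqrt_pos_of_lt {y : ℝ} (hy : y^2 < 1) : 0 < Real.sqrt (1 - y^2) :=
  Real.sqrt_pos.2 (by linarith)

lemma sq_sqrt' {y : ℝ} (hy : y^2 < 1) : (Real.sqrt (1 - y^2))^2 = 1 - y^2 :=
  Real.sq_sqrt (by linarith)

lemma hasDerivAt_sq1 {y : ℝ} (hy : y^2 < 1) :
    HasDerivAt (fun z => Real.sqrt (1 - z^2)) (-y / Real.sqrt (1 - y^2)) y := by
  have h1 : (0:ℝ) < 1 - y^2 := by linarith
  have inner : HasDerivAt (fun z : ℝ => 1 - z^2) (-(2*y)) y := by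
    simpa using ((hasDerivAt_pow 2 y).const_sub 1)
  have := (Real.hasDerivAt_sqrt (ne_of_gt h1)).comp y inner
  refine this.congr_deriv (Eq.symm ?_)
  have hs : Real.sqrt (1 - y^2) > 0 := Real.sqrt_pos.2 h1
  field_simp

lemma abs_lt_one_of_mem {s y : ℝ} (hs0 : 0 ≤ s) (hs1 : s < 1) (hy : y ∈ Set.Icc 0 s) :
    |y| < 1 := by
  rw [abs_lt]
  constructor <;> [linarith [hy.1]; linarith [hy.2]]

lemma f_eq {s : ℝ} (hs0 : 0 ≤ s) (hs1 : s < 1) :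
    fS s = 1 / Real.sqrt (1 - s^2) := by
  have key : ∀ y ∈ Set.Icc (0:ℝ) s, fS y * Real.sqrt (1 - y^2) = fS 0 * Real.sqrt (1 - 0^2) := by
    apply constant_of_has_deriv_right_zero
    · intro y hy
      have hy1 : |y| < 1 := abs_lt_one_of_mem hs0 hs1 hy
      have hy2 : y^2 < 1 := by have := abs_lt.1 hy1; nlinarith
      exact (((hasDerivAt_fS hy1).mul (hasDerivAt_sq1 hy2)).continuousAt).continuousWithinAt
    · intro y hy
      have hy1 : |y| < 1 := abs_lt_one_of_mem hs0 hs1 (Set.mem_Icc.2 ⟨hy.1, hy.2.le⟩)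
      have hy2 : y^2 < 1 := by
        have := abs_lt.1 hy1; nlinarith
      have hd := (hasDerivAt_fS hy1).mul (hasDerivAt_sq1 hy2)
      have hsp := sqrt_pos_of_lt hy2
      have hss := sq_sqrt' hy2
      set X := ∑' n, b n * ((2*n : ℕ) * y ^ (2*n - 1)) with hX
      set F := fS y with hF
      set S := Real.sqrt (1 - y^2) with hSdef
      have hode := ode_f hy1
      rw [← hX, ← hF] at hode
      have hss' : S * S = 1 - y^2 := by rw [← sq]; exact hss
      have hzero : X * S + F * (-y / S) = 0 := by
        field_simp
        linear_combination hode + X * hss'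
      rw [hzero] at hd
      exact hd.hasDerivWithinAt
  have h0 : fS 0 = 1 := by
    have : (fun n => b n * (0:ℝ) ^ (2*n)) = fun n => if n = 0 then 1 else 0 := by
      funext n
      cases n with
      | zero => simp [b_zero]
      | succ m => simp [zero_pow (by omega : 2*(m+1) ≠ 0)]
    rw [fS, this, tsum_ite_eq]
  have hs2 : s^2 < 1 := by nlinarith
  have := key s (Set.mem_Icc.2 ⟨hs0, le_refl s⟩)
  rw [h0] at this
  simp only [ne_eq, OfNat.ofNat_ne_zero, not_false_eq_true, zero_pow, sub_zero, Real.sqrt_one,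
    mul_one, one_mul] at this
  have hsp := sqrt_pos_of_lt hs2
  field_simp
  linarith [this]

lemma a_eq {s : ℝ} (hs0 : 0 ≤ s) (hs1 : s < 1) : aS s = Real.arcsin s := by
  have key : ∀ y ∈ Set.Icc (0:ℝ) s, aS y - Real.arcsin y = aS 0 - Real.arcsin 0 := by
    apply constant_of_has_deriv_right_zero
    · intro y hy
      have hy1 : |y| < 1 := abs_lt_one_of_mem hs0 hs1 hy
      exact ((hasDerivAt_aS hy1).sub
        (Real.hasDerivAt_arcsin (by have := abs_lt.1 hy1; linarith)
          (by have := abs_lt.1 hy1; linarith))).continuousAt.continuousWithinAt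
    · intro y hy
      have hy0 : 0 ≤ y := hy.1
      have hys : y < 1 := lt_of_lt_of_le hy.2 hs1.le
      have hy1 : |y| < 1 := by rw [abs_of_nonneg hy0]; exact hys
      have hd := (hasDerivAt_aS hy1).sub
        (Real.hasDerivAt_arcsin (by linarith) (by linarith))
      have hDA : (∑' n, (b n / (2*(n:ℕ)+1)) * ((2*n+1 : ℕ) * y ^ (2*n+1 - 1))) = fS y := by
        rw [fS]
        apply tsum_congr
        intro n
        have hne : (2*(n:ℝ)+1) ≠ 0 := by positivity
        have e1 : 2*n+1-1 = 2*n := by omega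
        rw [e1]
        push_cast
        field_simp
      rw [hDA, f_eq hy0 hys, sub_self] at hd
      exact hd.hasDerivWithinAt
  have h0 : aS 0 = 0 := by
    rw [aS]
    have : (fun n => (b n / (2*(n:ℕ)+1)) * (0:ℝ) ^ (2*n+1)) = fun _ => (0:ℝ) := by
      funext n
      rw [zero_pow (by omega : 2*n+1 ≠ 0), mul_zero]
    rw [this, tsum_zero]
  have := key s (Set.mem_Icc.2 ⟨hs0, le_refl s⟩)
  rw [h0, Real.arcsin_zero] at this
  linarith [this]

lemma c_one : c 1 = 1 / 2 := by
  have hb1 : b 1 = 1 / 2 := by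
    rw [show b 1 = _ from b_succ 0, b_zero]; norm_num
  have hG1 : G 1 = 1 := by simp [G]
  rw [c, hb1, hG1, mul_one]

lemma ode_h {x : ℝ} (hx0 : 0 ≤ x) (hx1 : x < 1) :
    (1 - x^2) * (∑' n, c n * ((2*n : ℕ) * x ^ (2*n - 1))) - x * hS x = Real.arcsin x := by
  have hx : |x| < 1 := by rw [abs_of_nonneg hx0]; exact hx1
  set D := ∑' n, c n * ((2*n : ℕ) * x ^ (2*n - 1)) with hD
  set g : ℕ → ℝ := fun n => c n * ((2*n : ℕ) * x ^ (2*n - 1)) with hg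
  have hgsum : HasSum g D := (summable_hD hx).hasSum
  have S0 : HasSum (fun n => c n * x ^ (2*n)) (hS x) := (summable_hS hx).hasSum
  have hT : HasSum (fun n => (1 - x^2) * g n - x * (c n * x ^ (2*n)))
      ((1 - x^2) * D - x * hS x) := (hgsum.mul_left _).sub (S0.mul_left _)
  have hshift : HasSum (fun n => g (n+1)) (D - ∑ i ∈ Finset.range 1, g i) :=
    ((hasSum_nat_add_iff' 1).2 hgsum)
  have hasum : HasSum (fun n => (b n / (2*(n:ℕ)+1)) * x ^ (2*n+1)) (aS x) :=
    (summable_aS hx).hasSum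
  have hT2 : HasSum (fun n => g n - g (n+1) + (b n / (2*(n:ℕ)+1)) * x ^ (2*n+1))
      (D - (D - ∑ i ∈ Finset.range 1, g i) + aS x) := (hgsum.sub hshift).add hasum
  have hTg : ∀ n, (1 - x^2) * g n - x * (c n * x ^ (2*n))
      = g n - g (n+1) + (b n / (2*(n:ℕ)+1)) * x ^ (2*n+1) := by
    intro n
    cases n with
    | zero =>
      simp [hg, c_zero, c_one, b_zero]
    | succ m =>
      have e1 : 2*(m+1) - 1 = 2*m+1 := by omega
      have e2 : 2*(m+1+1) - 1 = 2*m+3 := by omega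
      have e3 : 2*(m+1) = 2*m+2 := by omega
      have e4 : 2*(m+1+1) = 2*m+4 := by omega
      simp only [hg, e1, e2, e3, e4]
      push_cast
      have hc := c_rec (m+1)
      push_cast at hc
      linear_combination (x ^ (2*m+3)) * hc
  have hfun : (fun n => (1 - x^2) * g n - x * (c n * x ^ (2*n)))
      = fun n => g n - g (n+1) + (b n / (2*(n:ℕ)+1)) * x ^ (2*n+1) := funext hTg
  rw [hfun] at hT
  have := hT.unique hT2
  rw [this, a_eq hx0 hx1]
  simp [hg, c_zero]

lemma h_val {s : ℝ} (hs0 : 0 ≤ s) (hs1 : s < 1) :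
    hS s = Real.arcsin s ^ 2 / (2 * Real.sqrt (1 - s^2)) := by
  have key : ∀ y ∈ Set.Icc (0:ℝ) s,
      hS y * Real.sqrt (1 - y^2) - Real.arcsin y ^ 2 / 2
      = hS 0 * Real.sqrt (1 - 0^2) - Real.arcsin 0 ^ 2 / 2 := by
    apply constant_of_has_deriv_right_zero
    · intro y hy
      have hy1 : |y| < 1 := abs_lt_one_of_mem hs0 hs1 hy
      have hy2 : y^2 < 1 := by have := abs_lt.1 hy1; nlinarith
      exact (((hasDerivAt_hS hy1).mul (hasDerivAt_sq1 hy2)).sub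
        (((Real.hasDerivAt_arcsin (by have := abs_lt.1 hy1; linarith)
          (by have := abs_lt.1 hy1; linarith)).pow 2).div_const 2)).continuousAt.continuousWithinAt
    · intro y hy
      have hy0 : 0 ≤ y := hy.1
      have hys : y < 1 := lt_of_lt_of_le hy.2 hs1.le
      have hy1 : |y| < 1 := by rw [abs_of_nonneg hy0]; exact hys
      have hy2 : y^2 < 1 := by nlinarith
      have hd := ((hasDerivAt_hS hy1).mul (hasDerivAt_sq1 hy2)).sub
        (((Real.hasDerivAt_arcsin (by linarith) (by linarith)).pow 2).div_const 2)
      have hsp := sqrt_pos_of_lt hy2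
      have hss := sq_sqrt' hy2
      set X := ∑' n, c n * ((2*n : ℕ) * y ^ (2*n - 1)) with hX
      set H := hS y with hH
      set S := Real.sqrt (1 - y^2) with hSdef
      have hode := ode_h hy0 hys
      rw [← hX, ← hH] at hode
      have hss' : S * S = 1 - y^2 := by rw [← sq]; exact hss
      clear_value X H S
      have hzero : X * S + H * (-y / S) - (2 : ℕ) * Real.arcsin y ^ (2-1) * (1 / S) / 2 = 0 := by
        push_cast
        field_simp
        linear_combination hode + X * hss'
      rw [hzero] at hd
      exact hd.hasDerivWithinAt
  have h0 : hS 0 = 0 := by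
    rw [hS]
    have : (fun n => c n * (0:ℝ) ^ (2*n)) = fun _ => (0:ℝ) := by
      funext n
      cases n with
      | zero => simp [c_zero]
      | succ m => rw [zero_pow (by omega : 2*(m+1) ≠ 0), mul_zero]
    rw [this, tsum_zero]
  have hs2 : s^2 < 1 := by nlinarith
  have := key s (Set.mem_Icc.2 ⟨hs0, le_refl s⟩)
  rw [h0, Real.arcsin_zero] at this
  norm_num at this
  have hsp := sqrt_pos_of_lt hs2
  rw [eq_div_iff (by positivity)]
  linarith [this]

lemma h_hasSum {s : ℝ} (hs0 : 0 ≤ s) (hs1 : s < 1) :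
    HasSum (fun n => c n * s ^ (2*n))
      (Real.arcsin s ^ 2 / (2 * Real.sqrt (1 - s^2))) := by
  have hx : |s| < 1 := by rw [abs_of_nonneg hs0]; exact hs1
  have := (summable_hS hx).hasSum
  rwa [show (∑' n, c n * s ^ (2*n)) = hS s from rfl, h_val hs0 hs1] at this

noncomputable def Phi (t : ℝ) : ℝ :=
  (1/12) * t^3 - (1/8) * t^2 * Real.sin (2*t) - (1/8) * t * Real.cos (2*t)
  + (1/16) * Real.sin (2*t) + (3/8) * t^2 * Real.cos t - (3/4) * t * Real.sin t
  - (3/4) * Real.cos t - (1/24) * t^2 * Real.cos (3*t) + (1/36) * t * Real.sin (3*t)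
  + (1/108) * Real.cos (3*t)

lemma Phi_deriv (t : ℝ) :
    HasDerivAt Phi (t^2 * Real.sin t^2 * (1 - Real.sin t) / 2) t := by
  have ht : HasDerivAt (fun t : ℝ => t) 1 t := hasDerivAt_id t
  have ht2 : HasDerivAt (fun t : ℝ => t^2) (2*t) t := by simpa using hasDerivAt_pow 2 t
  have ht3 : HasDerivAt (fun t : ℝ => t^3) (3*t^2) t := by simpa using hasDerivAt_pow 3 t
  have hsin : HasDerivAt Real.sin (Real.cos t) t := Real.hasDerivAt_sin t
  have hcos : HasDerivAt Real.cos (-Real.sin t) t := Real.hasDerivAt_cos t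
  have hs2 : HasDerivAt (fun t : ℝ => Real.sin (2*t)) (2 * Real.cos (2*t)) t := by
    simpa [Function.comp_def, mul_comm] using (Real.hasDerivAt_sin (2*t)).comp t (ht.const_mul 2)
  have hc2 : HasDerivAt (fun t : ℝ => Real.cos (2*t)) (-(2 * Real.sin (2*t))) t := by
    have := (Real.hasDerivAt_cos (2*t)).comp t (ht.const_mul 2)
    simpa [Function.comp_def, mul_comm] using this
  have hs3 : HasDerivAt (fun t : ℝ => Real.sin (3*t)) (3 * Real.cos (3*t)) t := by
    simpa [Function.comp_def, mul_comm] using (Real.hasDerivAt_sin (3*t)).comp t (ht.const_mul 3)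
  have hc3 : HasDerivAt (fun t : ℝ => Real.cos (3*t)) (-(3 * Real.sin (3*t))) t := by
    have := (Real.hasDerivAt_cos (3*t)).comp t (ht.const_mul 3)
    simpa [Function.comp_def, mul_comm] using this
  have H := ((((((((((ht3.const_mul (1/12:ℝ)).sub
    ((ht2.mul hs2).const_mul (1/8:ℝ))).sub
    ((ht.mul hc2).const_mul (1/8:ℝ))).add
    (hs2.const_mul (1/16:ℝ))).add
    ((ht2.mul hcos).const_mul (3/8:ℝ))).sub
    ((ht.mul hsin).const_mul (3/4:ℝ))).sub
    (hcos.const_mul (3/4:ℝ))).sub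
    ((ht2.mul hc3).const_mul (1/24:ℝ))).add
    ((ht.mul hs3).const_mul (1/36:ℝ))).add
    (hc3.const_mul (1/108:ℝ)))
  have hPhi : Phi = fun t : ℝ =>
      (1/12) * t^3 - (1/8) * (t^2 * Real.sin (2*t)) - (1/8) * (t * Real.cos (2*t))
      + (1/16) * Real.sin (2*t) + (3/8) * (t^2 * Real.cos t) - (3/4) * (t * Real.sin t)
      - (3/4) * Real.cos t - (1/24) * (t^2 * Real.cos (3*t)) + (1/36) * (t * Real.sin (3*t))
      + (1/108) * Real.cos (3*t) := by
    funext x; rw [Phi]; ring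
  rw [hPhi]
  refine H.congr_deriv (Eq.symm ?_)
  rw [Real.cos_two_mul, Real.sin_three_mul, Real.sin_two_mul, Real.cos_three_mul]
  linear_combination (t^2/2) * (Real.sin_sq_add_cos_sq t)

lemma final_integral :
    ∫ t in (0:ℝ)..(π/2), t^2 * Real.sin t^2 * (1 - Real.sin t) / 2
      = π^3/96 - 47*π/144 + 20/27 := by
  have hcont : Continuous (fun t : ℝ => t^2 * Real.sin t^2 * (1 - Real.sin t) / 2) := by
    continuity
  rw [intervalIntegral.integral_eq_sub_of_hasDerivAt
    (fun x _ => Phi_deriv x) (hcont.intervalIntegrable _ _)]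
  rw [Phi, Phi]
  have h1 : Real.sin (2*(π/2)) = 0 := by rw [show 2*(π/2) = π by ring, Real.sin_pi]
  have h2 : Real.cos (2*(π/2)) = -1 := by rw [show 2*(π/2) = π by ring, Real.cos_pi]
  have h3 : Real.sin (3*(π/2)) = -1 := by
    rw [show 3*(π/2) = π + π/2 by ring, Real.sin_add, Real.sin_pi, Real.cos_pi]
    simp
  have h4 : Real.cos (3*(π/2)) = 0 := by
    rw [show 3*(π/2) = π + π/2 by ring, Real.cos_add, Real.sin_pi, Real.cos_pi]
    simp
  rw [h1, h2, h3, h4]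
  simp [Real.sin_pi_div_two, Real.cos_pi_div_two]
  ring

lemma term_integral (k : ℕ) :
    ∫ θ in (0:ℝ)..(π/2), c k * Real.sin θ ^ (2*k+2) * (1 - Real.sin θ) * Real.cos θ
      = c k * (1/(2*(k:ℝ)+3) - 1/(2*(k:ℝ)+4)) := by
  have hcont : Continuous (fun θ : ℝ => c k * Real.sin θ ^ (2*k+2) * (1 - Real.sin θ) * Real.cos θ) := by
    continuity
  have hderiv : ∀ θ ∈ Set.uIcc (0:ℝ) (π/2),
      HasDerivAt (fun θ => c k * (Real.sin θ ^ (2*k+3) / (2*(k:ℝ)+3)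
        - Real.sin θ ^ (2*k+4) / (2*(k:ℝ)+4)))
        (c k * Real.sin θ ^ (2*k+2) * (1 - Real.sin θ) * Real.cos θ) θ := by
    intro θ _
    have h1 := ((Real.hasDerivAt_sin θ).pow (2*k+3)).div_const (2*(k:ℝ)+3)
    have h2 := ((Real.hasDerivAt_sin θ).pow (2*k+4)).div_const (2*(k:ℝ)+4)
    have H := (h1.sub h2).const_mul (c k)
    refine H.congr_deriv (Eq.symm ?_)
    have e1 : 2*k+3-1 = 2*k+2 := by omega
    have e2 : 2*k+4-1 = 2*k+3 := by omega
    rw [e1, e2]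
    push_cast
    have h3 : (2*(k:ℝ)+3) ≠ 0 := by positivity
    have h4 : (2*(k:ℝ)+4) ≠ 0 := by positivity
    field_simp
    ring
  rw [intervalIntegral.integral_eq_sub_of_hasDerivAt hderiv (hcont.intervalIntegrable _ _)]
  rw [Real.sin_pi_div_two, Real.sin_zero]
  rw [zero_pow (by omega : 2*k+3 ≠ 0), zero_pow (by omega : 2*k+4 ≠ 0)]
  simp

lemma sin_lt_one_of_lt {θ : ℝ} (h0 : 0 < θ) (h1 : θ < π/2) : Real.sin θ < 1 := by
  have hc : 0 < Real.cos θ :=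
    Real.cos_pos_of_mem_Ioo ⟨by linarith [Real.pi_pos], h1⟩
  nlinarith [Real.sin_sq_add_cos_sq θ, Real.sin_le_one θ]

lemma sum_F {θ : ℝ} (hθ : θ ∈ Set.Ioc (0:ℝ) (π/2)) :
    ∑' k, c k * Real.sin θ ^ (2*k+2) * (1 - Real.sin θ) * Real.cos θ
      = θ^2 * Real.sin θ^2 * (1 - Real.sin θ) / 2 := by
  rcases eq_or_lt_of_le hθ.2 with heq | hlt
  · rw [heq]
    simp [Real.sin_pi_div_two]
  · have hθ0 : 0 < θ := hθ.1
    have hpi : 0 < π := Real.pi_pos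
    have hs0 : 0 ≤ Real.sin θ :=
      Real.sin_nonneg_of_nonneg_of_le_pi hθ0.le (by linarith)
    have hs1 : Real.sin θ < 1 := sin_lt_one_of_lt hθ0 hlt
    have hc : 0 < Real.cos θ := Real.cos_pos_of_mem_Ioo ⟨by linarith, hlt⟩
    have hHS := h_hasSum hs0 hs1
    have h1s : 1 - Real.sin θ^2 = Real.cos θ^2 := by
      nlinarith [Real.sin_sq_add_cos_sq θ]
    have hsqrt : Real.sqrt (1 - Real.sin θ^2) = Real.cos θ := by
      rw [h1s, Real.sqrt_sq hc.le]
    have harc : Real.arcsin (Real.sin θ) = θ := Real.arcsin_sin (by linarith) hθ.2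
    rw [hsqrt, harc] at hHS
    have hM := hHS.mul_right (Real.sin θ^2 * (1 - Real.sin θ) * Real.cos θ)
    have hfun : (fun k => c k * Real.sin θ ^ (2*k) * (Real.sin θ^2 * (1 - Real.sin θ) * Real.cos θ))
        = fun k => c k * Real.sin θ ^ (2*k+2) * (1 - Real.sin θ) * Real.cos θ := by
      funext k
      rw [pow_add]
      ring
    have hval : θ^2 / (2 * Real.cos θ) * (Real.sin θ^2 * (1 - Real.sin θ) * Real.cos θ)
        = θ^2 * Real.sin θ^2 * (1 - Real.sin θ) / 2 := by
      field_simp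
    rw [hfun, hval] at hM
    exact hM.tsum_eq

lemma summable_base : Summable (fun k : ℕ => 2 * (1/((k:ℝ)+1)^2)) := by
  have h1 : Summable (fun n : ℕ => 1/(n:ℝ)^2) := by
    exact_mod_cast summable_one_div_nat_pow.mpr one_lt_two
  have h2 : Summable (fun n : ℕ => 1/((n:ℝ)+1)^2) := by
    have := (summable_nat_add_iff 1).mpr h1
    apply this.congr
    intro n
    push_cast
    ring
  exact h2.mul_left 2

lemma term_le (k : ℕ) : c k * (1/(2*(k:ℝ)+3) - 1/(2*(k:ℝ)+4)) ≤ 2 * (1/((k:ℝ)+1)^2) := by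
  have hk : (0:ℝ) ≤ (k:ℝ) := Nat.cast_nonneg k
  have h3 : (0:ℝ) < 2*(k:ℝ)+3 := by linarith
  have h4 : (0:ℝ) < 2*(k:ℝ)+4 := by linarith
  have hd : 1/(2*(k:ℝ)+3) - 1/(2*(k:ℝ)+4) ≤ 1/((k:ℝ)+1)^2 := by
    rw [div_sub_div _ _ (ne_of_gt h3) (ne_of_gt h4), div_le_div_iff₀ (by positivity) (by positivity)]
    nlinarith
  have hd0 : 0 ≤ 1/(2*(k:ℝ)+3) - 1/(2*(k:ℝ)+4) := by
    rw [sub_nonneg]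
    apply div_le_div_of_nonneg_left one_pos.le h3 (by linarith)
  calc c k * (1/(2*(k:ℝ)+3) - 1/(2*(k:ℝ)+4)) ≤ 2 * (1/((k:ℝ)+1)^2) :=
    mul_le_mul (c_le_two k) hd hd0 (by norm_num)

lemma term_nonneg (k : ℕ) : 0 ≤ c k * (1/(2*(k:ℝ)+3) - 1/(2*(k:ℝ)+4)) := by
  have hk : (0:ℝ) ≤ (k:ℝ) := Nat.cast_nonneg k
  have h3 : (0:ℝ) < 2*(k:ℝ)+3 := by linarith
  apply mul_nonneg (c_nonneg k)
  rw [sub_nonneg]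
  apply div_le_div_of_nonneg_left one_pos.le h3 (by linarith)

end CBG

open CBG MeasureTheory Real

theorem central_binom_G_series :
    HasSum
      (fun k : ℕ =>
        (Nat.choose (2 * k) k : ℝ) * G k /
          (4 ^ k * (2 * (k : ℝ) + 3) * (2 * (k : ℝ) + 4)))
      (Real.pi ^ 3 / 96 - 47 * Real.pi / 144 + 20 / 27) := by
  have hle : (0:ℝ) ≤ π/2 := by positivity
  set μ := volume.restrict (Set.Ioc (0:ℝ) (π/2)) with hμ
  set F : ℕ → ℝ → ℝ := fun k θ => c k * Real.sin θ ^ (2*k+2) * (1 - Real.sin θ) * Real.cos θ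
    with hF
  have hcont : ∀ k, Continuous (F k) := by
    intro k
    apply Continuous.mul
    apply Continuous.mul
    apply Continuous.mul continuous_const (Real.continuous_sin.pow _)
    · exact continuous_const.sub Real.continuous_sin
    · exact Real.continuous_cos
  have hF_int : ∀ k, Integrable (F k) μ := fun k => (hcont k).integrableOn_Ioc
  have hFeq : ∀ k, ∫ θ, F k θ ∂μ = c k * (1/(2*(k:ℝ)+3) - 1/(2*(k:ℝ)+4)) := by
    intro k
    rw [hμ, ← intervalIntegral.integral_of_le hle]
    exact term_integral k
  have hFpos : ∀ k, ∀ θ ∈ Set.Ioc (0:ℝ) (π/2), 0 ≤ F k θ := by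
    intro k θ hθ
    have hpi : 0 < π := Real.pi_pos
    have hs0 : 0 ≤ Real.sin θ :=
      Real.sin_nonneg_of_nonneg_of_le_pi hθ.1.le (by linarith [hθ.2])
    have hc0 : 0 ≤ Real.cos θ := Real.cos_nonneg_of_mem_Icc ⟨by linarith [hθ.1], hθ.2⟩
    have hs1 : Real.sin θ ≤ 1 := Real.sin_le_one θ
    apply mul_nonneg (mul_nonneg (mul_nonneg (c_nonneg k) (by positivity)) (by linarith)) hc0
  have hnorm : ∀ k, ∫ θ, ‖F k θ‖ ∂μ = ∫ θ, F k θ ∂μ := by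
    intro k
    apply setIntegral_congr_fun measurableSet_Ioc
    intro θ hθ
    exact Real.norm_of_nonneg (hFpos k θ hθ)
  have hsummable : Summable (fun k => ∫ θ, ‖F k θ‖ ∂μ) := by
    have heq : (fun k => ∫ θ, ‖F k θ‖ ∂μ) = fun k => c k * (1/(2*(k:ℝ)+3) - 1/(2*(k:ℝ)+4)) := by
      funext k; rw [hnorm k, hFeq k]
    rw [heq]
    exact Summable.of_nonneg_of_le term_nonneg term_le summable_base
  have hmain := hasSum_integral_of_summable_integral_norm hF_int hsummable
  have hsum_eq : (∫ θ, (∑' k, F k θ) ∂μ) = π^3/96 - 47*π/144 + 20/27 := by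
    have h1 : (∫ θ, (∑' k, F k θ) ∂μ)
        = ∫ θ in Set.Ioc (0:ℝ) (π/2), θ^2 * Real.sin θ^2 * (1 - Real.sin θ) / 2 := by
      apply setIntegral_congr_fun measurableSet_Ioc
      intro θ hθ
      exact sum_F hθ
    rw [h1, ← intervalIntegral.integral_of_le hle, final_integral]
  have hterm : (fun k => ∫ θ, F k θ ∂μ)
      = fun k : ℕ => (Nat.choose (2 * k) k : ℝ) * G k /
          (4 ^ k * (2 * (k : ℝ) + 3) * (2 * (k : ℝ) + 4)) := by
    funext k
    rw [hFeq k, c, b]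
    have hk : (0:ℝ) ≤ (k:ℝ) := Nat.cast_nonneg k
    have h3 : (2*(k:ℝ)+3) ≠ 0 := by positivity
    have h4 : (2*(k:ℝ)+4) ≠ 0 := by positivity
    have h5 : ((4:ℝ))^k ≠ 0 := by positivity
    field_simp
    ring
  rw [hterm, hsum_eq] at hmain
  exact hmain
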